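/- arXiv:1303.1746 — 5 statements merged into one kernel-verified Lean document; each statement's English description precedes it below -/
import Mathlib

section
/- If a trajectory of x' = cos θ, y' = sin θ, θ' = u with (x(0), y(0), θ(0)) = (0,0,0) satisfies x(1)² + y(1)² = 1, then u ≡ 0 a.e. on [0,1] and the endpoint is (x(1), y(1), θ(1)) = (1, 0, 0). -/
open MeasureTheory Set intervalIntegral Metric Filter

/-- If a trajectory of `x' = cos θ, y' = sin θ, θ' = u` (with measurable bounded
control `u`, written in integral form) starts at `(0,0,0)` and satisfies
`x(1)² + y(1)² = 1`, then `u ≡ 0` a.e. on `[0,1]` and the endpoint is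
`(x(1), y(1), θ(1)) = (1, 0, 0)`. -/
theorem boundary_point_straight_line
    (x y θ u : ℝ → ℝ)
    (hu : Measurable u) (C : ℝ) (hC : ∀ t, |u t| ≤ C)
    (hθ : ∀ t, θ t = ∫ s in (0:ℝ)..t, u s)
    (hx : ∀ t, x t = ∫ s in (0:ℝ)..t, Real.cos (θ s))
    (hy : ∀ t, y t = ∫ s in (0:ℝ)..t, Real.sin (θ s))
    (hend : (x 1) ^ 2 + (y 1) ^ 2 = 1) :
    (∀ᵐ t ∂(volume.restrict (Set.Icc (0:ℝ) 1)), u t = 0) ∧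
      x 1 = 1 ∧ y 1 = 0 ∧ θ 1 = 0 := by
  -- interval integrability of u
  have huInt : ∀ a b : ℝ, IntervalIntegrable u volume a b := by
    intro a b
    refine (_root_.intervalIntegrable_const (c := C)).mono_fun
      (hu.aestronglyMeasurable.restrict) ?_
    filter_upwards with t
    simpa [Real.norm_eq_abs] using (hC t).trans (le_abs_self C)
  -- θ is continuous
  have hθc : Continuous θ := by
    have : θ = fun t => ∫ s in (0:ℝ)..t, u s := funext hθ
    rw [this]
    exact intervalIntegral.continuous_primitive huInt 0
  have hθ00 : θ 0 = 0 := by rw [hθ 0, intervalIntegral.integral_same]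
  -- choose angle φ with cos φ = x 1, sin φ = y 1
  set z : ℂ := ⟨x 1, y 1⟩ with hzdef
  have hzabs : ‖z‖ = 1 := by
    rw [Complex.norm_def, Complex.normSq_apply]
    simp only [hzdef]
    rw [show x 1 * x 1 + y 1 * y 1 = x 1 ^ 2 + y 1 ^ 2 by ring, hend, Real.sqrt_one]
  have hz0 : z ≠ 0 := by
    intro h; rw [h] at hzabs; simp at hzabs
  set φ : ℝ := Complex.arg z with hφdef
  have hcosφ : Real.cos φ = x 1 := by
    rw [hφdef, Complex.cos_arg hz0, hzabs]; simp [hzdef]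
  have hsinφ : Real.sin φ = y 1 := by
    rw [hφdef, Complex.sin_arg, hzabs]; simp [hzdef]
  -- the key integral identity
  have hcosInt : ∀ a b : ℝ, IntervalIntegrable (fun s => Real.cos (θ s)) volume a b :=
    fun a b => (Real.continuous_cos.comp hθc).intervalIntegrable a b
  have hsinInt : ∀ a b : ℝ, IntervalIntegrable (fun s => Real.sin (θ s)) volume a b :=
    fun a b => (Real.continuous_sin.comp hθc).intervalIntegrable a b
  have key : (∫ s in (0:ℝ)..1, Real.cos (θ s - φ)) = 1 := by
    have : ∀ s, Real.cos (θ s - φ)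
        = Real.cos φ * Real.cos (θ s) + Real.sin φ * Real.sin (θ s) := by
      intro s; rw [Real.cos_sub]; ring
    rw [intervalIntegral.integral_congr (fun s _ => this s)]
    rw [intervalIntegral.integral_add ((hcosInt 0 1).const_mul _) ((hsinInt 0 1).const_mul _),
      intervalIntegral.integral_const_mul, intervalIntegral.integral_const_mul,
      ← hx 1, ← hy 1, hcosφ, hsinφ]
    linear_combination hend
  -- the nonneg continuous function 1 - cos(θ s - φ) has zero integral, hence vanishes on [0,1]
  set g : ℝ → ℝ := fun s => 1 - Real.cos (θ s - φ) with hgdef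
  have hgc : Continuous g := by
    apply continuous_const.sub
    exact Real.continuous_cos.comp (hθc.sub continuous_const)
  have hgnn : ∀ s, 0 ≤ g s := fun s => by
    simp only [hgdef, sub_nonneg]; exact Real.cos_le_one _
  have hgint0 : (∫ s in (0:ℝ)..1, g s) = 0 := by
    simp only [hgdef]
    rw [intervalIntegral.integral_sub (intervalIntegrable_const) ?_, key]
    · simp
    · exact (Real.continuous_cos.comp (hθc.sub continuous_const)).intervalIntegrable 0 1
  have hG0 : ∀ t ∈ Icc (0:ℝ) 1, (∫ s in (0:ℝ)..t, g s) = 0 := by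
    intro t ⟨ht0, ht1⟩
    have hA : 0 ≤ ∫ s in (0:ℝ)..t, g s :=
      intervalIntegral.integral_nonneg ht0 (fun s _ => hgnn s)
    have hB : 0 ≤ ∫ s in t..1, g s :=
      intervalIntegral.integral_nonneg ht1 (fun s _ => hgnn s)
    have hAB : (∫ s in (0:ℝ)..t, g s) + (∫ s in t..1, g s) = 0 := by
      rw [intervalIntegral.integral_add_adjacent_intervals
        (hgc.intervalIntegrable 0 t) (hgc.intervalIntegrable t 1), hgint0]
    linarith
  have hgzero : ∀ t ∈ Icc (0:ℝ) 1, g t = 0 := by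
    have hIoo : EqOn g (fun _ => (0:ℝ)) (Ioo (0:ℝ) 1) := by
      intro t ht
      have hne : Ioo (0:ℝ) 1 ∈ nhds t := (isOpen_Ioo).mem_nhds ht
      have hGev : (fun r => ∫ s in (0:ℝ)..r, g s) =ᶠ[nhds t] (fun _ => (0:ℝ)) := by
        filter_upwards [hne] with r hr
        exact hG0 r (Ioo_subset_Icc_self hr)
      have hd1 : HasDerivAt (fun r => ∫ s in (0:ℝ)..r, g s) (g t) t :=
        intervalIntegral.integral_hasDerivAt_right (hgc.intervalIntegrable 0 t)
          (hgc.stronglyMeasurableAtFilter _ _) hgc.continuousAt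
      have hd2 : HasDerivAt (fun r => ∫ s in (0:ℝ)..r, g s) 0 t :=
        (hasDerivAt_const t (0:ℝ)).congr_of_eventuallyEq hGev
      exact hd1.unique hd2
    have := hIoo.closure hgc continuous_const
    rw [closure_Ioo (by norm_num : (0:ℝ) ≠ 1)] at this
    exact fun t ht => this ht
  have hcos1 : ∀ t ∈ Icc (0:ℝ) 1, Real.cos (θ t - φ) = 1 := by
    intro t ht
    have := hgzero t ht
    simp only [hgdef] at this
    linarith
  -- θ vanishes identically on [0,1]
  have hθzero : ∀ t ∈ Icc (0:ℝ) 1, θ t = 0 := by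
    intro t ht
    by_contra hne
    obtain ⟨m, hm⟩ := (Real.cos_eq_one_iff _).1 (hcos1 0 (by norm_num))
    rw [hθ00, zero_sub] at hm
    obtain ⟨n, hn⟩ := (Real.cos_eq_one_iff _).1 (hcos1 t ht)
    have hS : IsPreconnected ((fun s => θ s - φ) '' Icc (0:ℝ) 1) :=
      isPreconnected_Icc.image _ ((hθc.sub continuous_const).continuousOn)
    have hmem0 : -φ ∈ (fun s => θ s - φ) '' Icc (0:ℝ) 1 :=
      ⟨0, by norm_num, by show θ 0 - φ = -φ; rw [hθ00]; ring⟩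
    have hmemt : θ t - φ ∈ (fun s => θ s - φ) '' Icc (0:ℝ) 1 := ⟨t, ht, rfl⟩
    have hθt : θ t = ((n : ℝ) - m) * (2 * Real.pi) := by
      have : θ t - φ - (-φ) = (n : ℝ) * (2 * Real.pi) - (m : ℝ) * (2 * Real.pi) := by
        rw [hn, hm]
      push_cast at this ⊢
      linarith
    have hnm : (n : ℝ) ≠ (m : ℝ) := by
      intro h
      apply hne
      rw [hθt, h]; ring
    have hπ : 0 < Real.pi := Real.pi_pos
    rcases lt_or_gt_of_ne hnm with hlt | hgt
    · -- θ t ≤ -2π, so -φ - π lies between θ t - φ and -φ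
      have hnm1 : (n : ℝ) ≤ (m : ℝ) - 1 := by
        have : (n : ℤ) < m := by exact_mod_cast hlt
        have : (n : ℤ) ≤ m - 1 := by omega
        exact_mod_cast this
      have hθtle : θ t ≤ -(2 * Real.pi) := by
        rw [hθt]; nlinarith
      have hsub : Icc (θ t - φ) (-φ) ⊆ (fun s => θ s - φ) '' Icc (0:ℝ) 1 :=
        hS.Icc_subset hmemt hmem0
      have : -φ - Real.pi ∈ Icc (θ t - φ) (-φ) := by
        constructor <;> [linarith; linarith]
      obtain ⟨s, hs, hseq⟩ := hsub this
      have hseq' : θ s - φ = -φ - Real.pi := hseq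
      have : Real.cos (θ s - φ) = -1 := by
        rw [hseq', show -φ - Real.pi = ((m - 1 : ℤ) : ℝ) * (2 * Real.pi) + Real.pi by
          push_cast; linarith]
        exact Real.cos_int_mul_two_pi_add_pi _
      rw [hcos1 s hs] at this
      norm_num at this
    · have hnm1 : (m : ℝ) + 1 ≤ (n : ℝ) := by
        have : (m : ℤ) < n := by exact_mod_cast hgt
        have : (m : ℤ) + 1 ≤ n := by omega
        exact_mod_cast this
      have hθtge : 2 * Real.pi ≤ θ t := by
        rw [hθt]; nlinarith
      have hsub : Icc (-φ) (θ t - φ) ⊆ (fun s => θ s - φ) '' Icc (0:ℝ) 1 :=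
        hS.Icc_subset hmem0 hmemt
      have : -φ + Real.pi ∈ Icc (-φ) (θ t - φ) := by
        constructor <;> [linarith; linarith]
      obtain ⟨s, hs, hseq⟩ := hsub this
      have hseq' : θ s - φ = -φ + Real.pi := hseq
      have : Real.cos (θ s - φ) = -1 := by
        rw [hseq', show -φ + Real.pi = ((m : ℤ) : ℝ) * (2 * Real.pi) + Real.pi by
          push_cast; linarith]
        exact Real.cos_int_mul_two_pi_add_pi _
      rw [hcos1 s hs] at this
      norm_num at this
  -- endpoint values
  have hx1 : x 1 = 1 := by
    rw [hx 1]
    have : EqOn (fun s => Real.cos (θ s)) (fun _ => (1:ℝ)) (uIcc (0:ℝ) 1) := by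
      intro s hs
      rw [uIcc_of_le (by norm_num : (0:ℝ) ≤ 1)] at hs
      simp [hθzero s hs]
    rw [intervalIntegral.integral_congr this]
    simp
  have hy1 : y 1 = 0 := by
    rw [hy 1]
    have : EqOn (fun s => Real.sin (θ s)) (fun _ => (0:ℝ)) (uIcc (0:ℝ) 1) := by
      intro s hs
      rw [uIcc_of_le (by norm_num : (0:ℝ) ≤ 1)] at hs
      simp [hθzero s hs]
    rw [intervalIntegral.integral_congr this]
    simp
  have hθ1 : θ 1 = 0 := hθzero 1 (by norm_num)
  refine ⟨?_, hx1, hy1, hθ1⟩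
  -- now show u = 0 a.e. on [0,1], via the Lebesgue differentiation theorem
  have huLoc : LocallyIntegrable u volume := by
    intro t
    exact ⟨Icc (t - 1) (t + 1), Icc_mem_nhds (by linarith) (by linarith),
      (intervalIntegrable_iff_integrableOn_Icc_of_le (by linarith)).1 (huInt _ _)⟩
  have hLD := IsUnifLocDoublingMeasure.ae_tendsto_average (μ := (volume : Measure ℝ))
    huLoc 1
  have keyae : ∀ᵐ t ∂(volume : Measure ℝ), t ∈ Ioo (0:ℝ) 1 → u t = 0 := by
    filter_upwards [hLD] with t ht htmem
    obtain ⟨ht0, ht1⟩ := htmem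
    set ε : ℝ := min t (1 - t) with hεdef
    have hε : 0 < ε := lt_min ht0 (by linarith)
    set δ : ℕ → ℝ := fun n => ε / (n + 2) with hδdef
    have hδpos : ∀ n, 0 < δ n := fun n => div_pos hε (by positivity)
    have hδle : ∀ n, δ n ≤ ε := fun n => by
      rw [hδdef]
      rw [div_le_iff₀ (by positivity)]
      nlinarith [hε.le]
    have hδtendsto : Tendsto δ atTop (nhdsWithin 0 (Ioi 0)) := by
      apply tendsto_nhdsWithin_of_tendsto_nhds_of_eventually_within
      · have h : Tendsto (fun n : ℕ => ((n : ℝ) + 2)) atTop atTop :=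
          tendsto_atTop_add_const_right atTop 2 tendsto_natCast_atTop_atTop
        exact Tendsto.const_div_atTop h ε
      · filter_upwards with n using hδpos n
    have hmem : ∀ᶠ n in atTop, t ∈ closedBall t (1 * δ n) := by
      filter_upwards with n
      simp [(hδpos n).le]
    have htt := ht (fun _ => t) δ hδtendsto hmem
    -- each average is zero
    have havg : ∀ n, (⨍ y in closedBall t (δ n), u y) = 0 := by
      intro n
      have hsub0 : 0 ≤ t - δ n := by
        have := hδle n
        have : δ n ≤ t := le_trans (hδle n) (min_le_left _ _)
        linarith
      have hsub1 : t + δ n ≤ 1 := by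
        have : δ n ≤ 1 - t := le_trans (hδle n) (min_le_right _ _)
        linarith
      have hle : t - δ n ≤ t + δ n := by nlinarith [hδpos n]
      have hIcc : (∫ y in closedBall t (δ n), u y) = ∫ y in (t - δ n)..(t + δ n), u y := by
        rw [Real.closedBall_eq_Icc, intervalIntegral.integral_of_le hle,
          integral_Icc_eq_integral_Ioc]
      have hint0 : (∫ y in (t - δ n)..(t + δ n), u y) = 0 := by
        have h1 : (∫ s in (0:ℝ)..(t + δ n), u s) = 0 := by
          rw [← hθ (t + δ n)]
          exact hθzero _ ⟨by linarith, hsub1⟩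
        have h2 : (∫ s in (0:ℝ)..(t - δ n), u s) = 0 := by
          rw [← hθ (t - δ n)]
          exact hθzero _ ⟨hsub0, by linarith⟩
        have := intervalIntegral.integral_interval_sub_left (huInt 0 (t + δ n)) (huInt 0 (t - δ n))
        rw [h1, h2] at this
        simpa using this.symm
      rw [setAverage_eq, hIcc, hint0, smul_zero]
    rw [show (fun n => ⨍ y in closedBall t (δ n), u y) = (fun _ => (0:ℝ)) from funext havg]
      at htt
    exact (tendsto_nhds_unique tendsto_const_nhds htt).symm
  have h01 : (volume.restrict (Icc (0:ℝ) 1)) ((Ioo (0:ℝ) 1)ᶜ) = 0 := by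
    rw [Measure.restrict_apply (measurableSet_Ioo.compl)]
    have hsub : (Ioo (0:ℝ) 1)ᶜ ∩ Icc 0 1 ⊆ ({0, 1} : Set ℝ) := by
      rintro w ⟨hw1, hw2⟩
      rcases eq_or_lt_of_le hw2.1 with h|h
      · exact Or.inl h.symm
      rcases eq_or_lt_of_le hw2.2 with h'|h'
      · exact Or.inr h'
      · exact absurd ⟨h, h'⟩ hw1
    exact measure_mono_null hsub ((Set.toFinite ({0,1} : Set ℝ)).measure_zero volume)
  have hIooae : ∀ᵐ t ∂(volume.restrict (Icc (0:ℝ) 1)), t ∈ Ioo (0:ℝ) 1 := h01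
  filter_upwards [ae_restrict_of_ae keyae, hIooae] with t h1 h2
  exact h1 h2
end

section
/- Let k ∈ (0,1) and let p₁¹ ∈ (K, 3K) be the first positive root of f₁(p) = sn(p)dn(p) − (2E(p) − p)cn(p). Then f₁(p) > 0 for p ∈ (0, p₁¹) and f₁(p) < 0 for p ∈ (p₁¹, 3K). -/
open MeasureTheory intervalIntegral

/-- Let `k ∈ (0,1)`, let `sn, cn, dn` be the Jacobi elliptic functions with
modulus `k` (characterized by their ODE system, initial values and identities),
let `K = K(k)` be the first positive zero of `cn`, and let
`f₁(p) = sn(p)dn(p) − (2E(p) − p)cn(p)` with `E(p) = ∫₀ᵖ dn²`.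
If `p₁¹ ∈ (K, 3K)` is the unique root of `f₁` in `(K, 3K)` (and `g₁ = f₁/cn` is
strictly increasing on `(K, 3K)`), then `f₁ > 0` on `(0, p₁¹)` and `f₁ < 0`
on `(p₁¹, 3K)`. -/
theorem f1_sign
    (k : ℝ) (hk : k ∈ Set.Ioo (0:ℝ) 1)
    (sn cn dn : ℝ → ℝ)
    (hsn : ∀ p, HasDerivAt sn (cn p * dn p) p)
    (hcn : ∀ p, HasDerivAt cn (-(sn p * dn p)) p)
    (hdn : ∀ p, HasDerivAt dn (-(k ^ 2 * sn p * cn p)) p)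
    (hsn0 : sn 0 = 0) (hcn0 : cn 0 = 1) (hdn0 : dn 0 = 1)
    (hid1 : ∀ p, sn p ^ 2 + cn p ^ 2 = 1)
    (hid2 : ∀ p, dn p ^ 2 = 1 - k ^ 2 * sn p ^ 2)
    (K : ℝ) (hKpos : 0 < K) (hcnK : cn K = 0)
    (hKfirst : ∀ p ∈ Set.Ico (0:ℝ) K, 0 < cn p)
    (f₁ : ℝ → ℝ)
    (hf₁ : ∀ p, f₁ p = sn p * dn p - (2 * (∫ t in (0:ℝ)..p, dn t ^ 2) - p) * cn p)
    (p₁ : ℝ) (hp₁mem : p₁ ∈ Set.Ioo K (3 * K)) (hp₁root : f₁ p₁ = 0)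
    (hp₁uniq : ∀ p ∈ Set.Ioo K (3 * K), f₁ p = 0 → p = p₁)
    (hg₁mono : StrictMonoOn (fun p => f₁ p / cn p) (Set.Ioo K (3 * K))) :
    (∀ p ∈ Set.Ioo 0 p₁, 0 < f₁ p) ∧ (∀ p ∈ Set.Ioo p₁ (3 * K), f₁ p < 0) := by
  obtain ⟨hk0, hk1⟩ := hk
  have hsnc : Continuous sn := by
    refine continuous_iff_continuousAt.2 fun p => (hsn p).continuousAt
  have hcnc : Continuous cn := by
    refine continuous_iff_continuousAt.2 fun p => (hcn p).continuousAt
  have hdnc : Continuous dn := by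
    refine continuous_iff_continuousAt.2 fun p => (hdn p).continuousAt
  -- dn is positive everywhere
  have hdnsq : ∀ p, 1 - k ^ 2 ≤ dn p ^ 2 := by
    intro p
    have h1 := hid1 p
    have h2 := hid2 p
    nlinarith [sq_nonneg (cn p), sq_nonneg k, sq_nonneg (sn p)]
  have hdnne : ∀ p, dn p ≠ 0 := by
    intro p hp
    have := hdnsq p
    rw [hp] at this
    nlinarith
  have hdnpos : ∀ p, 0 < dn p := by
    intro p
    rcases lt_trichotomy (dn p) 0 with h | h | h
    · exfalso
      rcases lt_trichotomy p 0 with hp | hp | hp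
      · have := intermediate_value_Icc hp.le hdnc.continuousOn
        have h0 : (0:ℝ) ∈ Set.Icc (dn p) (dn 0) := by
          rw [hdn0]; exact ⟨h.le, zero_le_one⟩
        obtain ⟨c, _, hc⟩ := this h0
        exact hdnne c hc
      · rw [hp, hdn0] at h; linarith
      · have := intermediate_value_Icc' hp.le hdnc.continuousOn
        have h0 : (0:ℝ) ∈ Set.Icc (dn p) (dn 0) := by
          rw [hdn0]; exact ⟨h.le, zero_le_one⟩
        obtain ⟨c, _, hc⟩ := this h0
        exact hdnne c hc
    · exact absurd h (hdnne p)
    · exact h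
  -- sn is positive on (0, K] and sn K = 1
  have hsnmono : StrictMonoOn sn (Set.Icc 0 K) := by
    refine strictMonoOn_of_deriv_pos (convex_Icc 0 K) hsnc.continuousOn ?_
    intro x hx
    rw [interior_Icc] at hx
    rw [(hsn x).deriv]
    exact mul_pos (hKfirst x ⟨hx.1.le, hx.2⟩) (hdnpos x)
  have hsnpos : ∀ p ∈ Set.Ioc 0 K, 0 < sn p := by
    intro p hp
    have := hsnmono ⟨le_refl 0, hKpos.le⟩ ⟨hp.1.le, hp.2⟩ hp.1
    rwa [hsn0] at this
  have hsnK : sn K = 1 := by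
    have h1 := hid1 K
    have h2 := hsnpos K ⟨hKpos, le_refl K⟩
    rw [hcnK] at h1
    nlinarith
  -- f₁ at 0 and K
  have hE : ∀ p, HasDerivAt (fun u => ∫ t in (0:ℝ)..u, dn t ^ 2) (dn p ^ 2) p := by
    intro p
    exact ((hdnc.pow 2).integral_hasStrictDerivAt 0 p).hasDerivAt
  have hEc : Continuous (fun u => ∫ t in (0:ℝ)..u, dn t ^ 2) :=
    continuous_iff_continuousAt.2 fun p => (hE p).continuousAt
  have hf₁0 : f₁ 0 = 0 := by
    rw [hf₁ 0, hsn0, hcn0, intervalIntegral.integral_same]; ring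
  have hf₁K : f₁ K = dn K := by
    rw [hf₁ K, hcnK, hsnK]; ring
  have hf₁Kpos : 0 < f₁ K := by rw [hf₁K]; exact hdnpos K
  -- derivative of f₁
  have hf₁fun : f₁ = fun p => sn p * dn p -
      (2 * (∫ t in (0:ℝ)..p, dn t ^ 2) - p) * cn p := funext hf₁
  have hF : ∀ p, HasDerivAt f₁
      ((2 * (∫ t in (0:ℝ)..p, dn t ^ 2) - p) * (sn p * dn p)) p := by
    intro p
    have h1 : HasDerivAt (fun u => sn u * dn u)
        (cn p * dn p * dn p + sn p * -(k ^ 2 * sn p * cn p)) p :=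
      (hsn p).mul (hdn p)
    have h2 : HasDerivAt (fun u => (2 * (∫ t in (0:ℝ)..u, dn t ^ 2) - u) * cn u)
        ((2 * dn p ^ 2 - 1) * cn p +
          (2 * (∫ t in (0:ℝ)..p, dn t ^ 2) - p) * -(sn p * dn p)) p := by
      exact (((hE p).const_mul 2).sub (hasDerivAt_id p)).mul (hcn p)
    have h3 := h1.sub h2
    rw [hf₁fun]
    refine h3.congr_deriv ?_
    linear_combination (-cn p) * hid2 p
  have hf₁c : Continuous f₁ :=
    continuous_iff_continuousAt.2 fun p => (hF p).continuousAt
  -- g₁ := f₁ / cn is strictly monotone on [0, K)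
  set g₁ : ℝ → ℝ := fun p => f₁ p / cn p with hg₁def
  have hG : ∀ p, cn p ≠ 0 → HasDerivAt g₁ ((sn p * dn p / cn p) ^ 2) p := by
    intro p hp
    have h := (hF p).div (hcn p) hp
    refine h.congr_deriv ?_
    rw [hf₁ p]
    field_simp
    ring
  have hg₁mono0 : StrictMonoOn g₁ (Set.Ico 0 K) := by
    refine strictMonoOn_of_deriv_pos (convex_Ico 0 K) ?_ ?_
    · refine ContinuousOn.div hf₁c.continuousOn hcnc.continuousOn ?_
      intro x hx
      exact (hKfirst x hx).ne'
    · intro x hx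
      rw [interior_Ico] at hx
      have hcnx : cn x ≠ 0 := (hKfirst x ⟨hx.1.le, hx.2⟩).ne'
      rw [(hG x hcnx).deriv]
      have hsnx : 0 < sn x := hsnpos x ⟨hx.1, hx.2.le⟩
      exact pow_pos (div_pos (mul_pos hsnx (hdnpos x)) (hKfirst x ⟨hx.1.le, hx.2⟩)) 2
  have hg₁0 : g₁ 0 = 0 := by simp [hg₁def, hf₁0]
  -- Part on (0, K)
  have hIooK : ∀ p ∈ Set.Ioo (0:ℝ) K, 0 < f₁ p := by
    intro p hp
    have := hg₁mono0 ⟨le_refl 0, hKpos⟩ ⟨hp.1.le, hp.2⟩ hp.1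
    rw [hg₁0] at this
    have hcnp : 0 < cn p := hKfirst p ⟨hp.1.le, hp.2⟩
    have : 0 < f₁ p / cn p := this
    exact (div_pos_iff.mp this).elim (fun h => h.1)
      (fun h => absurd h.2 (not_lt.mpr hcnp.le))
  -- f₁ > 0 on (K, p₁)
  have h3K : K < 3 * K := by linarith
  have hIooKp₁ : ∀ p ∈ Set.Ioo K p₁, 0 < f₁ p := by
    intro p hp
    rcases lt_trichotomy (f₁ p) 0 with h | h | h
    · exfalso
      have hivt := intermediate_value_Ioo' hp.1.le hf₁c.continuousOn
      have h0 : (0:ℝ) ∈ Set.Ioo (f₁ p) (f₁ K) := ⟨h, hf₁Kpos⟩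
      obtain ⟨c, hc, hc0⟩ := hivt h0
      have hcmem : c ∈ Set.Ioo K (3 * K) := ⟨hc.1, by
        have := hp₁mem.2; linarith [hc.2, hp.2]⟩
      have hcp := hp₁uniq c hcmem hc0
      linarith [hc.2, hp.2, hcp.le, hcp.ge]
    · exfalso
      have hpmem : p ∈ Set.Ioo K (3 * K) := ⟨hp.1, by linarith [hp.2, hp₁mem.2]⟩
      have := hp₁uniq p hpmem h
      linarith [hp.2]
    · exact h
  -- g₁ p₁ = 0
  have hg₁p₁ : g₁ p₁ = 0 := by simp [hg₁def, hp₁root]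
  -- cn < 0 on (K, p₁)
  have hcnneg : ∀ p ∈ Set.Ioo K p₁, cn p < 0 := by
    intro p hp
    have hpmem : p ∈ Set.Ioo K (3 * K) := ⟨hp.1, by linarith [hp.2, hp₁mem.2]⟩
    have hlt : g₁ p < g₁ p₁ := hg₁mono hpmem hp₁mem hp.2
    rw [hg₁p₁] at hlt
    have hfp := hIooKp₁ p hp
    rcases lt_trichotomy (cn p) 0 with h | h | h
    · exact h
    · exfalso; rw [hg₁def] at hlt; simp only [h, div_zero] at hlt; exact lt_irrefl 0 hlt
    · exfalso
      have : 0 < f₁ p / cn p := div_pos hfp h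
      exact absurd hlt (not_lt.mpr this.le)
  -- cn p₁ ≠ 0
  have hcnp₁ : cn p₁ ≠ 0 := by
    intro h
    have h1 := hid1 p₁
    rw [h] at h1
    have := hf₁ p₁
    rw [h, hp₁root] at this
    have hd := hdnpos p₁
    have hsd : sn p₁ * dn p₁ = 0 := by linear_combination -this
    rcases mul_eq_zero.mp hsd with h' | h'
    · rw [h'] at h1; norm_num at h1
    · rw [h'] at hd; exact lt_irrefl 0 hd
  -- cn ≠ 0 on (p₁, 3K)
  have hcnne2 : ∀ p ∈ Set.Ioo p₁ (3 * K), cn p ≠ 0 := by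
    intro p hp h
    have hpmem : p ∈ Set.Ioo K (3 * K) := ⟨lt_trans hp₁mem.1 hp.1, hp.2⟩
    have hlt : g₁ p₁ < g₁ p := hg₁mono hp₁mem hpmem hp.1
    rw [hg₁p₁, hg₁def] at hlt
    simp only [h, div_zero] at hlt
    exact lt_irrefl 0 hlt
  -- cn < 0 on (p₁, 3K)
  have hmid : (K + p₁) / 2 ∈ Set.Ioo K p₁ := by
    constructor <;> [linarith [hp₁mem.1]; linarith [hp₁mem.1]]
  have hcnmid : cn ((K + p₁) / 2) < 0 := hcnneg _ hmid
  have hcnne3 : ∀ p ∈ Set.Ioo K (3 * K), cn p ≠ 0 := by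
    intro p hp
    rcases lt_trichotomy p p₁ with h | h | h
    · exact (hcnneg p ⟨hp.1, h⟩).ne
    · rw [h]; exact hcnp₁
    · exact hcnne2 p ⟨h, hp.2⟩
  have hcnneg3 : ∀ p ∈ Set.Ioo p₁ (3 * K), cn p < 0 := by
    intro p hp
    by_contra hcon
    push_neg at hcon
    have hne := hcnne2 p hp
    have hpos : 0 < cn p := lt_of_le_of_ne hcon (Ne.symm hne)
    -- IVT between mid and p
    have hmidp : (K + p₁) / 2 < p := by
      have := hmid.2; linarith [hp.1]
    have hivt := intermediate_value_Ioo hmidp.le hcnc.continuousOn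
    have h0 : (0:ℝ) ∈ Set.Ioo (cn ((K + p₁) / 2)) (cn p) := ⟨hcnmid, hpos⟩
    obtain ⟨c, hc, hc0⟩ := hivt h0
    have hcmem : c ∈ Set.Ioo K (3 * K) := ⟨lt_trans hmid.1 hc.1, lt_trans hc.2 hp.2⟩
    exact hcnne3 c hcmem hc0
  refine ⟨fun p hp => ?_, fun p hp => ?_⟩
  · rcases lt_trichotomy p K with h | h | h
    · exact hIooK p ⟨hp.1, h⟩
    · rw [h]; exact hf₁Kpos
    · exact hIooKp₁ p ⟨h, hp.2⟩
  · have hpmem : p ∈ Set.Ioo K (3 * K) := ⟨lt_trans hp₁mem.1 hp.1, hp.2⟩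
    have hlt : g₁ p₁ < g₁ p := hg₁mono hp₁mem hpmem hp.1
    rw [hg₁p₁] at hlt
    have hcnp : cn p < 0 := hcnneg3 p hp
    rcases div_pos_iff.mp hlt with ⟨h1, h2⟩ | ⟨h1, h2⟩
    · exact absurd h2 (not_lt.mpr hcnp.le)
    · exact h1
end

section
/- If kⁿ ∈ (0,1) with kⁿ → 1 and pⁿ ∈ (0, K(kⁿ)) with pⁿ → +∞, then the Jacobi amplitude satisfies am(pⁿ, kⁿ) → π/2. -/
open Filter intervalIntegral

/-- The incomplete elliptic integral of the first kind
`F(u,k) = ∫₀ᵘ dt/√(1 − k² sin² t)`. -/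
noncomputable def ellF (u k : ℝ) : ℝ :=
  ∫ t in (0:ℝ)..u, 1 / Real.sqrt (1 - k ^ 2 * Real.sin t ^ 2)

lemma ell_cont {k : ℝ} (hk : k ∈ Set.Ioo (0:ℝ) 1) :
    Continuous fun t : ℝ => 1 / Real.sqrt (1 - k ^ 2 * Real.sin t ^ 2) := by
  apply Continuous.div continuous_const
  · exact (continuous_const.sub ((continuous_const.mul (Real.continuous_sin.pow 2)))).sqrt
  · intro x
    have h1 : Real.sin x ^ 2 ≤ 1 := by
      have := Real.sin_sq_le_one x; linarith
    have hk2 : k ^ 2 < 1 := by nlinarith [hk.1, hk.2]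
    have : (0:ℝ) < 1 - k ^ 2 * Real.sin x ^ 2 := by nlinarith [sq_nonneg (Real.sin x), sq_nonneg k]
    exact ne_of_gt (Real.sqrt_pos.2 this)

/-- If `kₙ ∈ (0,1)` with `kₙ → 1` and `pₙ ∈ (0, K(kₙ))` with `pₙ → +∞`, then the
Jacobi amplitude `uₙ = am(pₙ, kₙ)` — the unique `uₙ ∈ (0, π/2)` with
`F(uₙ, kₙ) = pₙ` — tends to `π/2`. -/
theorem amplitude_tendsto_pi_div_two
    (kn pn un : ℕ → ℝ)
    (hkn : ∀ n, kn n ∈ Set.Ioo (0:ℝ) 1)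
    (hkn1 : Tendsto kn atTop (nhds 1))
    (hpn : ∀ n, pn n ∈ Set.Ioo (0:ℝ) (ellF (Real.pi / 2) (kn n)))
    (hpninf : Tendsto pn atTop atTop)
    (hun : ∀ n, un n ∈ Set.Ioo (0:ℝ) (Real.pi / 2))
    (ham : ∀ n, ellF (un n) (kn n) = pn n) :
    Tendsto un atTop (nhds (Real.pi / 2)) := by
  rw [Metric.tendsto_atTop]
  intro ε hε
  set δ : ℝ := min ε (Real.pi / 2) with hδdef
  have hπ : (0:ℝ) < Real.pi / 2 := by positivity
  have hδpos : 0 < δ := lt_min hε hπ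
  have hδle : δ ≤ Real.pi / 2 := min_le_right _ _
  have hc : 0 < Real.cos (Real.pi / 2 - δ) := by
    apply Real.cos_pos_of_mem_Ioo
    constructor <;> [linarith [Real.pi_pos]; linarith]
  set c := Real.cos (Real.pi / 2 - δ)
  have hM := hpninf.eventually_gt_atTop ((Real.pi / 2) * (1 / c))
  rw [eventually_atTop] at hM
  obtain ⟨N, hN⟩ := hM
  refine ⟨N, fun n hn => ?_⟩
  have hunlt := (hun n).2
  have hungt := (hun n).1
  have hdist : dist (un n) (Real.pi / 2) = Real.pi / 2 - un n := by
    rw [Real.dist_eq, abs_of_nonpos (by linarith)]; ring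
  rw [hdist]
  by_contra hcon
  push_neg at hcon
  have hle : un n ≤ Real.pi / 2 - δ := by
    have : δ ≤ ε := min_le_left _ _
    linarith
  -- bound the integral
  have hcont := ell_cont (hkn n)
  have hint : IntervalIntegrable
      (fun t => 1 / Real.sqrt (1 - (kn n) ^ 2 * Real.sin t ^ 2))
      MeasureTheory.volume 0 (un n) := hcont.intervalIntegrable _ _
  have hbound : ∀ t ∈ Set.Icc (0:ℝ) (un n),
      1 / Real.sqrt (1 - (kn n) ^ 2 * Real.sin t ^ 2) ≤ 1 / c := by
    intro t ht
    have ht0 := ht.1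
    have ht1 : t ≤ Real.pi / 2 - δ := le_trans ht.2 hle
    have hcos : c ≤ Real.cos t :=
      Real.cos_le_cos_of_nonneg_of_le_pi ht0 (by linarith [Real.pi_pos]) ht1
    have hk2 : (kn n) ^ 2 ≤ 1 := by nlinarith [(hkn n).1, (hkn n).2]
    have h1 : Real.cos t ^ 2 ≤ 1 - (kn n) ^ 2 * Real.sin t ^ 2 := by
      have := Real.sin_sq_add_cos_sq t
      nlinarith [sq_nonneg (Real.sin t)]
    have hsq : c ≤ Real.sqrt (1 - (kn n) ^ 2 * Real.sin t ^ 2) := by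
      calc c ≤ Real.cos t := hcos
        _ = Real.sqrt (Real.cos t ^ 2) := (Real.sqrt_sq (by linarith)).symm
        _ ≤ _ := Real.sqrt_le_sqrt h1
    exact one_div_le_one_div_of_le hc hsq
  have hmono : ellF (un n) (kn n) ≤ ∫ _ in (0:ℝ)..(un n), 1 / c := by
    apply intervalIntegral.integral_mono_on (le_of_lt hungt) hint
      (intervalIntegrable_const) hbound
  rw [intervalIntegral.integral_const, ham n] at hmono
  simp only [smul_eq_mul, sub_zero] at hmono
  have : pn n ≤ (Real.pi / 2) * (1 / c) := by
    calc pn n ≤ un n * (1 / c) := hmono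
      _ ≤ (Real.pi / 2) * (1 / c) := by
        apply mul_le_mul_of_nonneg_right (le_of_lt hunlt) (by positivity)
  linarith [hN n hn]
end

section
/- For k ∈ (0,1) and u ∈ (π/2, π), define f_u(u,k) = sin u·√(1 − k² sin² u) − cos u·(2E(u,k) − F(u,k)). On the zero set {f_u = 0} with u ∈ (π/2, π), the partial derivative ∂f_u/∂u equals √(1 − k² sin² u)·sin² u / cos u and is strictly negative. -/
open intervalIntegral

/-- Incomplete elliptic integral of the second kind. -/
noncomputable def ellE (u k : ℝ) : ℝ :=
  ∫ t in (0:ℝ)..u, Real.sqrt (1 - k ^ 2 * Real.sin t ^ 2)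

/-- The function `f_u(u,k) = sin u·√(1 − k² sin²u) − cos u·(2E(u,k) − F(u,k))`. -/
noncomputable def fu (u k : ℝ) : ℝ :=
  Real.sin u * Real.sqrt (1 - k ^ 2 * Real.sin u ^ 2)
    - Real.cos u * (2 * ellE u k - ellF u k)

/-- On the zero set `{f_u = 0}` with `u ∈ (π/2, π)`, `k ∈ (0,1)`, the partial
derivative `∂f_u/∂u` equals `√(1 − k² sin²u)·sin²u / cos u` and is strictly
negative. -/
theorem fu_partial_u
    (k : ℝ) (hk : k ∈ Set.Ioo (0:ℝ) 1)
    (u : ℝ) (hu : u ∈ Set.Ioo (Real.pi / 2) Real.pi)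
    (hzero : fu u k = 0) :
    HasDerivAt (fun v => fu v k)
      (Real.sqrt (1 - k ^ 2 * Real.sin u ^ 2) * Real.sin u ^ 2 / Real.cos u) u ∧
    Real.sqrt (1 - k ^ 2 * Real.sin u ^ 2) * Real.sin u ^ 2 / Real.cos u < 0 := by
  obtain ⟨hk0, hk1⟩ := hk
  obtain ⟨hu1, hu2⟩ := hu
  have hpi := Real.pi_pos
  have hpos : ∀ t : ℝ, 0 < 1 - k ^ 2 * Real.sin t ^ 2 := by
    intro t
    nlinarith [Real.sin_sq_le_one t, sq_nonneg k, sq_nonneg (Real.sin t)]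
  have hgc : Continuous (fun t : ℝ => Real.sqrt (1 - k ^ 2 * Real.sin t ^ 2)) :=
    (continuous_const.sub (continuous_const.mul (Real.continuous_sin.pow 2))).sqrt
  have hg_ne : ∀ t : ℝ, Real.sqrt (1 - k ^ 2 * Real.sin t ^ 2) ≠ 0 :=
    fun t => (Real.sqrt_pos.mpr (hpos t)).ne'
  have hfc : Continuous (fun t : ℝ => 1 / Real.sqrt (1 - k ^ 2 * Real.sin t ^ 2)) :=
    continuous_const.div hgc hg_ne
  -- derivatives of the integrals
  have hE : HasDerivAt (fun v => ellE v k) (Real.sqrt (1 - k ^ 2 * Real.sin u ^ 2)) u :=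
    intervalIntegral.integral_hasDerivAt_right (hgc.intervalIntegrable 0 u)
      (hgc.stronglyMeasurableAtFilter _ _) hgc.continuousAt
  have hF : HasDerivAt (fun v => ellF v k) (1 / Real.sqrt (1 - k ^ 2 * Real.sin u ^ 2)) u :=
    intervalIntegral.integral_hasDerivAt_right (hfc.intervalIntegrable 0 u)
      (hfc.stronglyMeasurableAtFilter _ _) hfc.continuousAt
  -- derivative of the sqrt term
  have hh : HasDerivAt (fun v => 1 - k ^ 2 * Real.sin v ^ 2)
      (-(k ^ 2 * (2 * Real.sin u * Real.cos u))) u := by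
    have h1 := ((Real.hasDerivAt_sin u).pow 2).const_mul (k ^ 2)
    have h2 := (hasDerivAt_const u (1 : ℝ)).sub h1
    refine HasDerivAt.congr_deriv (f := fun v => 1 - k ^ 2 * Real.sin v ^ 2) h2 ?_
    norm_num
  have hg' : HasDerivAt (fun v => Real.sqrt (1 - k ^ 2 * Real.sin v ^ 2))
      (-(k ^ 2 * (2 * Real.sin u * Real.cos u)) /
        (2 * Real.sqrt (1 - k ^ 2 * Real.sin u ^ 2))) u :=
    hh.sqrt (hpos u).ne'
  have hterm1 := (Real.hasDerivAt_sin u).mul hg'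
  have hterm2 := (Real.hasDerivAt_cos u).mul ((hE.const_mul 2).sub hF)
  have hD : HasDerivAt (fun v => fu v k)
      ((Real.cos u * Real.sqrt (1 - k ^ 2 * Real.sin u ^ 2) +
        Real.sin u * (-(k ^ 2 * (2 * Real.sin u * Real.cos u)) /
          (2 * Real.sqrt (1 - k ^ 2 * Real.sin u ^ 2)))) -
       (-Real.sin u * (2 * ellE u k - ellF u k) +
        Real.cos u * (2 * Real.sqrt (1 - k ^ 2 * Real.sin u ^ 2) -
          1 / Real.sqrt (1 - k ^ 2 * Real.sin u ^ 2)))) u := by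
    have := hterm1.sub hterm2
    exact this
  -- basic sign facts
  have hc : Real.cos u < 0 := Real.cos_neg_of_pi_div_two_lt_of_lt hu1 (by linarith)
  have hs : 0 < Real.sin u := Real.sin_pos_of_pos_of_lt_pi (by linarith) hu2
  have hgpos : 0 < Real.sqrt (1 - k ^ 2 * Real.sin u ^ 2) := Real.sqrt_pos.mpr (hpos u)
  have hg2 : Real.sqrt (1 - k ^ 2 * Real.sin u ^ 2) ^ 2 = 1 - k ^ 2 * Real.sin u ^ 2 :=
    Real.sq_sqrt (hpos u).le
  have hz : Real.cos u * (2 * ellE u k - ellF u k) =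
      Real.sin u * Real.sqrt (1 - k ^ 2 * Real.sin u ^ 2) := by
    have := hzero
    unfold fu at this
    linarith
  have hcne : Real.cos u ≠ 0 := ne_of_lt hc
  have hE2F : 2 * ellE u k - ellF u k =
      Real.sin u * Real.sqrt (1 - k ^ 2 * Real.sin u ^ 2) / Real.cos u := by
    rw [eq_div_iff hcne]
    linarith [hz]
  constructor
  · convert hD using 1
    rw [hE2F]
    field_simp
    ring_nf
    rw [show (1 - Real.sin u ^ 2 * k ^ 2) = 1 - k ^ 2 * Real.sin u ^ 2 by ring]
    linear_combination (Real.cos u ^ 2 + 0 * Real.sqrt (1 - k ^ 2 * Real.sin u ^ 2) * Real.cos u ^ 3) * hg2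
  · apply div_neg_of_pos_of_neg _ hc
    positivity
end

section
/- For k ∈ (0,1) and u ∈ (π/2, π) with f_u(u,k) = 0, where f_u(u,k) = sin u·√(1 − k² sin² u) − cos u·(2E(u,k) − F(u,k)), the partial derivative ∂f_u/∂k equals −(√(1 − k² sin² u)·sin u − cos u·F(u,k)) / (2k(1 − k²)) and is strictly negative. -/
open intervalIntegral

lemma gg_pos {m : ℝ} (hm : m ^ 2 < 1) (t : ℝ) : 0 < 1 - m ^ 2 * Real.sin t ^ 2 := by
  nlinarith [Real.sin_sq_le_one t, sq_nonneg m, sq_nonneg (Real.sin t)]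

lemma sqrt_gg_pos {m : ℝ} (hm : m ^ 2 < 1) (t : ℝ) :
    0 < Real.sqrt (1 - m ^ 2 * Real.sin t ^ 2) :=
  Real.sqrt_pos.2 (gg_pos hm t)

lemma sq_sqrt_gg {m : ℝ} (hm : m ^ 2 < 1) (t : ℝ) :
    Real.sqrt (1 - m ^ 2 * Real.sin t ^ 2) ^ 2 = 1 - m ^ 2 * Real.sin t ^ 2 :=
  Real.sq_sqrt (gg_pos hm t).le

lemma hasDerivAt_sqrtg (t : ℝ) {m : ℝ} (hm : m ^ 2 < 1) :
    HasDerivAt (fun m : ℝ => Real.sqrt (1 - m ^ 2 * Real.sin t ^ 2))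
      (-(m * Real.sin t ^ 2) / Real.sqrt (1 - m ^ 2 * Real.sin t ^ 2)) m := by
  have h1 : HasDerivAt (fun m : ℝ => 1 - m ^ 2 * Real.sin t ^ 2)
      (-(2 * m * Real.sin t ^ 2)) m := by
    simpa using ((hasDerivAt_pow 2 m).mul_const (Real.sin t ^ 2)).const_sub 1
  have h2 := (Real.hasDerivAt_sqrt (ne_of_gt (gg_pos hm t))).comp m h1
  have hs := sqrt_gg_pos hm t
  refine h2.congr_deriv ?_
  field_simp

lemma hasDerivAt_invsqrtg (t : ℝ) {m : ℝ} (hm : m ^ 2 < 1) :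
    HasDerivAt (fun m : ℝ => 1 / Real.sqrt (1 - m ^ 2 * Real.sin t ^ 2))
      (m * Real.sin t ^ 2 /
        ((1 - m ^ 2 * Real.sin t ^ 2) * Real.sqrt (1 - m ^ 2 * Real.sin t ^ 2))) m := by
  have hs := sqrt_gg_pos hm t
  have h2 := sq_sqrt_gg hm t
  have h := (hasDerivAt_sqrtg t hm).inv hs.ne'
  simp only [one_div]
  refine h.congr_deriv ?_
  have hg := (gg_pos hm t).ne'
  rw [h2]
  field_simp

lemma cont_g (k : ℝ) : Continuous fun t : ℝ => 1 - k ^ 2 * Real.sin t ^ 2 := by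
  fun_prop

lemma cont_sqrtg (k : ℝ) : Continuous fun t : ℝ => Real.sqrt (1 - k ^ 2 * Real.sin t ^ 2) :=
  Real.continuous_sqrt.comp (cont_g k)

lemma cont_invsqrtg {k : ℝ} (hk : k ^ 2 < 1) :
    Continuous fun t : ℝ => 1 / Real.sqrt (1 - k ^ 2 * Real.sin t ^ 2) :=
  continuous_const.div (cont_sqrtg k) fun t => (sqrt_gg_pos hk t).ne'

/-- derivative in `t` of `h t = sin t cos t / √(1 - k² sin² t)`. -/
lemma hasDerivAt_h {k : ℝ} (hk : k ^ 2 < 1) (t : ℝ) :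
    HasDerivAt (fun t : ℝ => Real.sin t * Real.cos t / Real.sqrt (1 - k ^ 2 * Real.sin t ^ 2))
      ((1 - Real.sin t ^ 2) / Real.sqrt (1 - k ^ 2 * Real.sin t ^ 2)
        - (1 - k ^ 2) * Real.sin t ^ 2 /
          ((1 - k ^ 2 * Real.sin t ^ 2) * Real.sqrt (1 - k ^ 2 * Real.sin t ^ 2))) t := by
  have hg := gg_pos hk t
  have hs := sqrt_gg_pos hk t
  have h2 := sq_sqrt_gg hk t
  have hgt : HasDerivAt (fun t : ℝ => 1 - k ^ 2 * Real.sin t ^ 2)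
      (-(k ^ 2 * (2 * Real.sin t * Real.cos t))) t := by
    simpa [mul_assoc] using (((Real.hasDerivAt_sin t).pow 2).const_mul (k ^ 2)).const_sub 1
  have hst := (Real.hasDerivAt_sqrt hg.ne').comp t hgt
  have hnum : HasDerivAt (fun t : ℝ => Real.sin t * Real.cos t)
      (Real.cos t * Real.cos t + Real.sin t * -Real.sin t) t :=
    (Real.hasDerivAt_sin t).mul (Real.hasDerivAt_cos t)
  have hd := hnum.div hst hs.ne'
  refine hd.congr_deriv ?_
  simp only [Function.comp_apply]
  set s := Real.sqrt (1 - k ^ 2 * Real.sin t ^ 2) with hsd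
  have hg2 : 1 - Real.sin t ^ 2 * k ^ 2 ≠ 0 := by rw [mul_comm]; exact hg.ne'
  have hc : Real.cos t ^ 2 = 1 - Real.sin t ^ 2 := Real.cos_sq' t
  field_simp
  linear_combination ((s ^ 2 + Real.sin t ^ 2 * k ^ 2) * (1 - Real.sin t ^ 2 * k ^ 2)) * hc +
    ((1 - 2 * Real.sin t ^ 2) * (1 - Real.sin t ^ 2 * k ^ 2)
      - (1 - 2 * Real.sin t ^ 2 + Real.sin t ^ 4 * k ^ 2)) * h2

lemma cont_P {k : ℝ} (hk : k ^ 2 < 1) :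
    Continuous fun t : ℝ =>
      (1 - Real.sin t ^ 2) / Real.sqrt (1 - k ^ 2 * Real.sin t ^ 2)
        - (1 - k ^ 2) * Real.sin t ^ 2 /
          ((1 - k ^ 2 * Real.sin t ^ 2) * Real.sqrt (1 - k ^ 2 * Real.sin t ^ 2)) := by
  apply Continuous.sub
  · exact (by fun_prop : Continuous fun t : ℝ => 1 - Real.sin t ^ 2).div (cont_sqrtg k)
      fun t => (sqrt_gg_pos hk t).ne'
  · exact (by fun_prop : Continuous fun t : ℝ => (1 - k ^ 2) * Real.sin t ^ 2).div
      ((cont_g k).mul (cont_sqrtg k))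
      fun t => (mul_pos (gg_pos hk t) (sqrt_gg_pos hk t)).ne'

lemma integral_dE {k : ℝ} (hk0 : 0 < k) (hk : k ^ 2 < 1) (u : ℝ) :
    (∫ t in (0:ℝ)..u, -(k * Real.sin t ^ 2) / Real.sqrt (1 - k ^ 2 * Real.sin t ^ 2))
      = (ellE u k - ellF u k) / k := by
  have hpt : ∀ t : ℝ, -(k * Real.sin t ^ 2) / Real.sqrt (1 - k ^ 2 * Real.sin t ^ 2)
      = (1 / k) * Real.sqrt (1 - k ^ 2 * Real.sin t ^ 2)
        - (1 / k) * (1 / Real.sqrt (1 - k ^ 2 * Real.sin t ^ 2)) := by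
    intro t
    have hs := sqrt_gg_pos hk t
    have h2 := sq_sqrt_gg hk t
    field_simp
    linear_combination (-1) * h2
  simp_rw [hpt]
  rw [intervalIntegral.integral_sub (f := fun t => 1 / k * Real.sqrt (1 - k ^ 2 * Real.sin t ^ 2)) (g := fun t => 1 / k * (1 / Real.sqrt (1 - k ^ 2 * Real.sin t ^ 2))) ((continuous_const.mul (cont_sqrtg k)).intervalIntegrable 0 u)
      ((continuous_const.mul (cont_invsqrtg hk)).intervalIntegrable 0 u),
    intervalIntegral.integral_const_mul, intervalIntegral.integral_const_mul]
  rw [ellE, ellF]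
  ring

lemma integral_dF {k : ℝ} (hk0 : 0 < k) (hk : k ^ 2 < 1) (u : ℝ) :
    (∫ t in (0:ℝ)..u, k * Real.sin t ^ 2 /
        ((1 - k ^ 2 * Real.sin t ^ 2) * Real.sqrt (1 - k ^ 2 * Real.sin t ^ 2)))
      = -ellF u k / k + ellE u k / (k * (1 - k ^ 2))
        - k / (1 - k ^ 2) *
          (Real.sin u * Real.cos u / Real.sqrt (1 - k ^ 2 * Real.sin u ^ 2)) := by
  have hk1 : (1 : ℝ) - k ^ 2 ≠ 0 := by nlinarith
  have hpt : ∀ t : ℝ, k * Real.sin t ^ 2 /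
        ((1 - k ^ 2 * Real.sin t ^ 2) * Real.sqrt (1 - k ^ 2 * Real.sin t ^ 2))
      = (-(1 / k)) * (1 / Real.sqrt (1 - k ^ 2 * Real.sin t ^ 2))
        + (1 / (k * (1 - k ^ 2))) * Real.sqrt (1 - k ^ 2 * Real.sin t ^ 2)
        + (-(k / (1 - k ^ 2))) *
            ((1 - Real.sin t ^ 2) / Real.sqrt (1 - k ^ 2 * Real.sin t ^ 2)
              - (1 - k ^ 2) * Real.sin t ^ 2 /
                ((1 - k ^ 2 * Real.sin t ^ 2) * Real.sqrt (1 - k ^ 2 * Real.sin t ^ 2))) := by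
    intro t
    have hs := sqrt_gg_pos hk t
    have h2 := sq_sqrt_gg hk t
    have hg := gg_pos hk t
    field_simp
    linear_combination (-(1 - k ^ 2 * Real.sin t ^ 2)) * h2
  simp_rw [hpt]
  have i1 : IntervalIntegrable
      (fun t : ℝ => (-(1 / k)) * (1 / Real.sqrt (1 - k ^ 2 * Real.sin t ^ 2))) MeasureTheory.volume 0 u :=
    (continuous_const.mul (cont_invsqrtg hk)).intervalIntegrable 0 u
  have i2 : IntervalIntegrable
      (fun t : ℝ => (1 / (k * (1 - k ^ 2))) * Real.sqrt (1 - k ^ 2 * Real.sin t ^ 2)) MeasureTheory.volume 0 u :=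
    (continuous_const.mul (cont_sqrtg k)).intervalIntegrable 0 u
  have i3 : IntervalIntegrable
      (fun t : ℝ => (-(k / (1 - k ^ 2))) *
        ((1 - Real.sin t ^ 2) / Real.sqrt (1 - k ^ 2 * Real.sin t ^ 2)
          - (1 - k ^ 2) * Real.sin t ^ 2 /
            ((1 - k ^ 2 * Real.sin t ^ 2) * Real.sqrt (1 - k ^ 2 * Real.sin t ^ 2)))) MeasureTheory.volume 0 u :=
    (continuous_const.mul (cont_P hk)).intervalIntegrable 0 u
  rw [intervalIntegral.integral_add (i1.add i2) i3, intervalIntegral.integral_add i1 i2,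
    intervalIntegral.integral_const_mul, intervalIntegral.integral_const_mul,
    intervalIntegral.integral_const_mul]
  have hFTC : (∫ t in (0:ℝ)..u,
      ((1 - Real.sin t ^ 2) / Real.sqrt (1 - k ^ 2 * Real.sin t ^ 2)
        - (1 - k ^ 2) * Real.sin t ^ 2 /
          ((1 - k ^ 2 * Real.sin t ^ 2) * Real.sqrt (1 - k ^ 2 * Real.sin t ^ 2))))
      = Real.sin u * Real.cos u / Real.sqrt (1 - k ^ 2 * Real.sin u ^ 2) := by
    have := intervalIntegral.integral_eq_sub_of_hasDerivAt
      (f := fun t : ℝ => Real.sin t * Real.cos t / Real.sqrt (1 - k ^ 2 * Real.sin t ^ 2))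
      (fun t _ => hasDerivAt_h hk t) ((cont_P hk).intervalIntegrable 0 u)
    simpa using this
  rw [hFTC, ellE, ellF]
  ring

lemma ball_sq_lt {k : ℝ} (hk0 : 0 < k) (hk1 : k < 1) :
    ∀ x ∈ Metric.ball k ((1 - k) / 2), x ^ 2 < ((1 + k) / 2) ^ 2 := by
  intro x hx
  rw [Metric.mem_ball, Real.dist_eq, abs_lt] at hx
  have h1 : |x| < (1 + k) / 2 := by rw [abs_lt]; constructor <;> [linarith; linarith]
  calc x ^ 2 = |x| ^ 2 := (sq_abs x).symm
    _ < ((1 + k) / 2) ^ 2 := by nlinarith [abs_nonneg x]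

lemma hasDerivAt_ellE (u : ℝ) {k : ℝ} (hk0 : 0 < k) (hk1 : k < 1) :
    HasDerivAt (fun m => ellE u m)
      (∫ t in (0:ℝ)..u, -(k * Real.sin t ^ 2) / Real.sqrt (1 - k ^ 2 * Real.sin t ^ 2)) k := by
  have hk2 : k ^ 2 < 1 := by nlinarith
  set b : ℝ := (1 + k) / 2 with hbdef
  have hb0 : 0 < b := by rw [hbdef]; linarith
  have hb1 : b < 1 := by rw [hbdef]; linarith
  have hb2 : b ^ 2 < 1 := by nlinarith
  have hε : (0:ℝ) < (1 - k) / 2 := by linarith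
  have hsb : 0 < Real.sqrt (1 - b ^ 2) := Real.sqrt_pos.2 (by nlinarith)
  refine (intervalIntegral.hasDerivAt_integral_of_dominated_loc_of_deriv_le
    (F := fun m t => Real.sqrt (1 - m ^ 2 * Real.sin t ^ 2))
    (F' := fun m t => -(m * Real.sin t ^ 2) / Real.sqrt (1 - m ^ 2 * Real.sin t ^ 2))
    (bound := fun _ => b / Real.sqrt (1 - b ^ 2))
    (Metric.ball_mem_nhds k hε) ?_ ?_ ?_ ?_ ?_ ?_).2
  · exact Filter.Eventually.of_forall fun x =>
      (Real.continuous_sqrt.comp (cont_g x)).aestronglyMeasurable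
  · exact (cont_sqrtg k).intervalIntegrable 0 u
  · exact ((by fun_prop : Continuous fun t : ℝ => -(k * Real.sin t ^ 2)).div
      (cont_sqrtg k) fun t => (sqrt_gg_pos hk2 t).ne').aestronglyMeasurable
  · refine Filter.Eventually.of_forall fun t _ x hx => ?_
    have hx2 := ball_sq_lt hk0 hk1 x hx
    have hx1 : x ^ 2 < 1 := hx2.trans hb2
    have hxb : |x| ≤ b := by
      rw [Metric.mem_ball, Real.dist_eq, abs_lt] at hx
      rw [abs_le]; constructor <;> [nlinarith; nlinarith]
    have hgle : 1 - b ^ 2 ≤ 1 - x ^ 2 * Real.sin t ^ 2 := by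
      nlinarith [Real.sin_sq_le_one t, sq_nonneg x, sq_nonneg (Real.sin t)]
    rw [Real.norm_eq_abs, abs_div, abs_of_nonneg (Real.sqrt_nonneg _)]
    apply div_le_div₀ hb0.le _ hsb (Real.sqrt_le_sqrt hgle)
    rw [abs_neg, abs_mul, abs_of_nonneg (sq_nonneg (Real.sin t))]
    nlinarith [Real.sin_sq_le_one t, abs_nonneg x, sq_nonneg (Real.sin t)]
  · exact intervalIntegrable_const
  · exact Filter.Eventually.of_forall fun t _ x hx =>
      hasDerivAt_sqrtg t ((ball_sq_lt hk0 hk1 x hx).trans hb2)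

lemma hasDerivAt_ellF (u : ℝ) {k : ℝ} (hk0 : 0 < k) (hk1 : k < 1) :
    HasDerivAt (fun m => ellF u m)
      (∫ t in (0:ℝ)..u, k * Real.sin t ^ 2 /
        ((1 - k ^ 2 * Real.sin t ^ 2) * Real.sqrt (1 - k ^ 2 * Real.sin t ^ 2))) k := by
  have hk2 : k ^ 2 < 1 := by nlinarith
  set b : ℝ := (1 + k) / 2 with hbdef
  have hb0 : 0 < b := by rw [hbdef]; linarith
  have hb1 : b < 1 := by rw [hbdef]; linarith
  have hb2 : b ^ 2 < 1 := by nlinarith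
  have hε : (0:ℝ) < (1 - k) / 2 := by linarith
  have hc0 : (0:ℝ) < 1 - b ^ 2 := by nlinarith
  have hsb : 0 < Real.sqrt (1 - b ^ 2) := Real.sqrt_pos.2 hc0
  refine (intervalIntegral.hasDerivAt_integral_of_dominated_loc_of_deriv_le
    (F := fun m t => 1 / Real.sqrt (1 - m ^ 2 * Real.sin t ^ 2))
    (F' := fun m t => m * Real.sin t ^ 2 /
      ((1 - m ^ 2 * Real.sin t ^ 2) * Real.sqrt (1 - m ^ 2 * Real.sin t ^ 2)))
    (bound := fun _ => b / ((1 - b ^ 2) * Real.sqrt (1 - b ^ 2)))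
    (Metric.ball_mem_nhds k hε) ?_ ?_ ?_ ?_ ?_ ?_).2
  · refine Filter.Eventually.of_forall fun x => ?_
    simp only [one_div]
    exact ((cont_sqrtg x).measurable.inv).aestronglyMeasurable
  · exact (cont_invsqrtg hk2).intervalIntegrable 0 u
  · exact ((continuous_const.mul (by fun_prop : Continuous fun t : ℝ => Real.sin t ^ 2)).div
      ((cont_g k).mul (cont_sqrtg k))
      fun t => (mul_pos (gg_pos hk2 t) (sqrt_gg_pos hk2 t)).ne').aestronglyMeasurable
  · refine Filter.Eventually.of_forall fun t _ x hx => ?_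
    have hx2 := ball_sq_lt hk0 hk1 x hx
    have hx1 : x ^ 2 < 1 := hx2.trans hb2
    have hxb : |x| ≤ b := by
      rw [Metric.mem_ball, Real.dist_eq, abs_lt] at hx
      rw [abs_le]; constructor <;> [nlinarith; nlinarith]
    have hgle : 1 - b ^ 2 ≤ 1 - x ^ 2 * Real.sin t ^ 2 := by
      nlinarith [Real.sin_sq_le_one t, sq_nonneg x, sq_nonneg (Real.sin t)]
    have hgx := gg_pos hx1 t
    have hsx := sqrt_gg_pos hx1 t
    rw [Real.norm_eq_abs, abs_div, abs_of_nonneg (mul_pos hgx hsx).le]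
    apply div_le_div₀ hb0.le _ (mul_pos hc0 hsb) _
    · rw [abs_mul, abs_of_nonneg (sq_nonneg (Real.sin t))]
      nlinarith [Real.sin_sq_le_one t, abs_nonneg x, sq_nonneg (Real.sin t)]
    · exact mul_le_mul hgle (Real.sqrt_le_sqrt hgle) hsb.le hgx.le
  · exact intervalIntegrable_const
  · exact Filter.Eventually.of_forall fun t _ x hx =>
      hasDerivAt_invsqrtg t ((ball_sq_lt hk0 hk1 x hx).trans hb2)

/-- For `k ∈ (0,1)` and `u ∈ (π/2, π)` with `f_u(u,k) = 0`, the partial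
derivative `∂f_u/∂k` equals
`−(√(1 − k² sin²u)·sin u − cos u·F(u,k)) / (2k(1 − k²))` and is strictly
negative. -/
theorem fu_partial_k
    (k : ℝ) (hk : k ∈ Set.Ioo (0:ℝ) 1)
    (u : ℝ) (hu : u ∈ Set.Ioo (Real.pi / 2) Real.pi)
    (hzero : fu u k = 0) :
    HasDerivAt (fun m => fu u m)
      (-((Real.sqrt (1 - k ^ 2 * Real.sin u ^ 2) * Real.sin u
          - Real.cos u * ellF u k) / (2 * k * (1 - k ^ 2)))) k ∧
    -((Real.sqrt (1 - k ^ 2 * Real.sin u ^ 2) * Real.sin u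
        - Real.cos u * ellF u k) / (2 * k * (1 - k ^ 2))) < 0 := by
  obtain ⟨hk0, hk1⟩ := hk
  obtain ⟨hu1, hu2⟩ := hu
  have hpi := Real.pi_pos
  have hu0 : 0 < u := by linarith
  have hk2 : k ^ 2 < 1 := by nlinarith
  have hs := sqrt_gg_pos hk2 u
  have h2 := sq_sqrt_gg hk2 u
  have hsinu : 0 < Real.sin u := Real.sin_pos_of_pos_of_lt_pi hu0 hu2
  have hcosu : Real.cos u < 0 := Real.cos_neg_of_pi_div_two_lt_of_lt hu1 (by linarith)
  have hFpos : 0 < ellF u k := by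
    rw [ellF]
    apply intervalIntegral.intervalIntegral_pos_of_pos_on
      ((cont_invsqrtg hk2).intervalIntegrable 0 u)
      (fun t _ => by have := sqrt_gg_pos hk2 t; positivity) hu0
  have hE := hasDerivAt_ellE u hk0 hk1
  have hF := hasDerivAt_ellF u hk0 hk1
  rw [integral_dE hk0 hk2 u] at hE
  rw [integral_dF hk0 hk2 u] at hF
  have hBu : HasDerivAt (fun m : ℝ => Real.sin u * Real.sqrt (1 - m ^ 2 * Real.sin u ^ 2))
      (Real.sin u * (-(k * Real.sin u ^ 2) / Real.sqrt (1 - k ^ 2 * Real.sin u ^ 2))) k :=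
    (hasDerivAt_sqrtg u hk2).const_mul _
  have hD : HasDerivAt (fun m => fu u m)
      (Real.sin u * (-(k * Real.sin u ^ 2) / Real.sqrt (1 - k ^ 2 * Real.sin u ^ 2))
        - Real.cos u * (2 * ((ellE u k - ellF u k) / k)
          - (-ellF u k / k + ellE u k / (k * (1 - k ^ 2))
            - k / (1 - k ^ 2) *
              (Real.sin u * Real.cos u / Real.sqrt (1 - k ^ 2 * Real.sin u ^ 2))))) k := by
    have := hBu.sub (((hE.const_mul 2).sub hF).const_mul (Real.cos u))
    exact this
  have hknz : (1 : ℝ) - k ^ 2 ≠ 0 := by nlinarith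
  have hneg : -((Real.sqrt (1 - k ^ 2 * Real.sin u ^ 2) * Real.sin u
      - Real.cos u * ellF u k) / (2 * k * (1 - k ^ 2))) < 0 := by
    have hnum : 0 < Real.sqrt (1 - k ^ 2 * Real.sin u ^ 2) * Real.sin u
        - Real.cos u * ellF u k := by nlinarith
    have hden : 0 < 2 * k * (1 - k ^ 2) := by nlinarith
    have := div_pos hnum hden
    linarith
  refine ⟨?_, hneg⟩
  refine hD.congr_deriv ?_
  have hz : Real.sin u * Real.sqrt (1 - k ^ 2 * Real.sin u ^ 2)
      - Real.cos u * (2 * ellE u k - ellF u k) = 0 := hzero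
  have hc : Real.cos u ^ 2 = 1 - Real.sin u ^ 2 := Real.cos_sq' u
  set s := Real.sqrt (1 - k ^ 2 * Real.sin u ^ 2) with hsd
  field_simp
  linear_combination (s * (1 - 2 * k ^ 2)) * hz + (2 * k ^ 2 * Real.sin u) * h2
    + (-2 * Real.sin u * k ^ 2) * hc
end
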